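/- Vector Sum of Vector-Encodings (Lemma 2.2): Let 0 ≤ τ ≤ 1 and let Ũ_ψ and Ũ_φ be unitary matrices of size 2^{c+n}×2^{c+n} that are an (α,c,ε₀)-VE for |ψ⟩ ∈ ℂ^{2^n} and a (β,c,ε₁)-VE for |φ⟩ ∈ ℂ^{2^n}, respectively. Define |Γ⟩ := (τ/α)|ψ⟩ + ((1−τ)/β)|φ⟩, 𝒩 := ‖|Γ⟩‖₂, and assume 𝒩 > 0. Let R_τ be the 2×2 unitary with rows (√τ, −√(1−τ)) and (√(1−τ), √τ), and define the unitary V := (R_τ† ⊗ I_{c+n}) (|0⟩⟨0| ⊗ Ũ_ψ + |1⟩⟨1| ⊗ Ũ_φ) (R_τ ⊗ I_{c+n}) on ℂ^{2^{1+c+n}}. Then V is a (𝒩^{-1}, c+1, (ε₀/α + ε₁/β)/𝒩)-VE for |Γ⟩/𝒩. -/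

import Mathlib

open scoped Kronecker Matrix

noncomputable section

/-- Reinterpret a plain function as an element of `EuclideanSpace`. -/
def toEuc {𝕜 : Type*} [RCLike 𝕜] {ι : Type*} (v : ι → 𝕜) : EuclideanSpace 𝕜 ι := WithLp.toLp 2 v

/-- The vector encoded in the first block of the first column of `U`:
`(⟨0| ⊗ I) U |0⟩`. -/
def encVec {I N : Type*} [Zero I] [Zero N] (U : Matrix (I × N) (I × N) ℂ) :
    EuclideanSpace ℂ N := toEuc fun i => U (0, i) (0, 0)

/-- `U` is an `(α, ·, ε)`-vector-encoding of `ψ`: `U` is unitary and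
`‖ψ - α (⟨0| ⊗ I) U |0⟩‖₂ ≤ ε`. -/
def IsVE {I N : Type*} [Fintype I] [DecidableEq I] [Zero I] [Fintype N] [DecidableEq N] [Zero N]
    (U : Matrix (I × N) (I × N) ℂ) (α ε : ℝ) (ψ : EuclideanSpace ℂ N) : Prop :=
  U ∈ Matrix.unitaryGroup (I × N) ℂ ∧ ‖ψ - (α : ℂ) • encVec U‖ ≤ ε


lemma kron_conjT {m n p q : Type*} (A : Matrix m n ℂ) (B : Matrix p q ℂ) :
    (A ⊗ₖ B)ᴴ = Aᴴ ⊗ₖ Bᴴ := by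
  ext ⟨i,j⟩ ⟨k,l⟩
  simp [Matrix.conjTranspose_apply, Matrix.kroneckerMap_apply]

lemma kron_unitary {m p : Type*} [Fintype m] [DecidableEq m] [Fintype p] [DecidableEq p]
    {A : Matrix m m ℂ} {B : Matrix p p ℂ}
    (hA : A ∈ Matrix.unitaryGroup m ℂ) (hB : B ∈ Matrix.unitaryGroup p ℂ) :
    A ⊗ₖ B ∈ Matrix.unitaryGroup (m × p) ℂ := by
  rw [Matrix.mem_unitaryGroup_iff'] at *
  show (A ⊗ₖ B)ᴴ * (A ⊗ₖ B) = 1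
  rw [kron_conjT, ← Matrix.mul_kronecker_mul]

  rw [show Aᴴ * A = 1 from hA, show Bᴴ * B = 1 from hB, Matrix.one_kronecker_one]

lemma Rt_unitary (τ : ℝ) (hτ0 : 0 ≤ τ) (hτ1 : τ ≤ 1) :
    (!![(Real.sqrt τ : ℂ), -(Real.sqrt (1 - τ) : ℂ);
        (Real.sqrt (1 - τ) : ℂ), (Real.sqrt τ : ℂ)]) ∈ Matrix.unitaryGroup (Fin 2) ℂ := by
  rw [Matrix.mem_unitaryGroup_iff']
  have h1 : (Real.sqrt τ : ℂ) * (Real.sqrt τ : ℂ) = (τ : ℂ) := by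
    rw [← Complex.ofReal_mul, Real.mul_self_sqrt hτ0]
  have h2 : (Real.sqrt (1-τ) : ℂ) * (Real.sqrt (1-τ) : ℂ) = 1 - (τ : ℂ) := by
    rw [← Complex.ofReal_mul, Real.mul_self_sqrt (by linarith)]; push_cast; ring
  ext i j
  fin_cases i <;> fin_cases j <;>
    simp [Matrix.mul_apply, Fin.sum_univ_two, Matrix.conjTranspose_apply, Matrix.one_apply,
      ← Complex.ofReal_neg] <;> push_cast <;>
    first
      | linear_combination h1 + h2
      | linear_combination h2
      | linear_combination h1
      | ring

lemma mid_unitary {p : Type*} [Fintype p] [DecidableEq p]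
    {A B : Matrix p p ℂ} (hA : A ∈ Matrix.unitaryGroup p ℂ) (hB : B ∈ Matrix.unitaryGroup p ℂ) :
    (Matrix.single (0 : Fin 2) (0 : Fin 2) (1 : ℂ) ⊗ₖ A
      + Matrix.single (1 : Fin 2) (1 : Fin 2) (1 : ℂ) ⊗ₖ B)
      ∈ Matrix.unitaryGroup (Fin 2 × p) ℂ := by
  rw [Matrix.mem_unitaryGroup_iff'] at *
  have hstar : ∀ (i : Fin 2) (M : Matrix p p ℂ),
      star (Matrix.single i i (1 : ℂ) ⊗ₖ M)
        = Matrix.single i i (1 : ℂ) ⊗ₖ star M := by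
    intro i M
    show (Matrix.single i i (1 : ℂ) ⊗ₖ M)ᴴ = _
    have : (Matrix.single i i (1 : ℂ))ᴴ = Matrix.single i i 1 := by
      ext a b
      simp [Matrix.conjTranspose_apply, Matrix.single, and_comm, apply_ite]
    rw [kron_conjT, this]; rfl
  rw [star_add, hstar, hstar, add_mul, mul_add, mul_add,
    ← Matrix.mul_kronecker_mul, ← Matrix.mul_kronecker_mul,
    ← Matrix.mul_kronecker_mul, ← Matrix.mul_kronecker_mul,
    Matrix.single_mul_single_same, Matrix.single_mul_single_same,
    Matrix.single_mul_single_of_ne 1 0 0 1 (by decide) 1,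
    Matrix.single_mul_single_of_ne 1 1 1 0 (by decide) 1,
    hA, hB, Matrix.zero_kronecker, Matrix.zero_kronecker, mul_one]
  rw [add_zero, zero_add, ← Matrix.add_kronecker]
  rw [show Matrix.single (0 : Fin 2) (0 : Fin 2) (1 : ℂ)
      + Matrix.single (1 : Fin 2) (1 : Fin 2) (1 : ℂ) = 1 from by
    ext a b; fin_cases a <;> fin_cases b <;>
      simp [Matrix.single, Matrix.one_apply]]
  exact Matrix.one_kronecker_one

lemma V_entry {p : Type*} [Fintype p] [DecidableEq p] (τ : ℝ) (hτ0 : 0 ≤ τ) (hτ1 : τ ≤ 1)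
    (A B : Matrix p p ℂ) (x y : p)
    (Rτ : Matrix (Fin 2) (Fin 2) ℂ)
    (hR : Rτ = !![(Real.sqrt τ : ℂ), -(Real.sqrt (1 - τ) : ℂ);
                  (Real.sqrt (1 - τ) : ℂ), (Real.sqrt τ : ℂ)]) :
    ((Rτᴴ ⊗ₖ (1 : Matrix p p ℂ))
        * (Matrix.single (0 : Fin 2) (0 : Fin 2) (1 : ℂ) ⊗ₖ A
            + Matrix.single (1 : Fin 2) (1 : Fin 2) (1 : ℂ) ⊗ₖ B)
        * (Rτ ⊗ₖ (1 : Matrix p p ℂ))) (0, x) (0, y)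
      = (τ : ℂ) * A x y + ((1 - τ : ℝ) : ℂ) * B x y := by
  have key : (Rτᴴ ⊗ₖ (1 : Matrix p p ℂ))
        * (Matrix.single (0 : Fin 2) (0 : Fin 2) (1 : ℂ) ⊗ₖ A
            + Matrix.single (1 : Fin 2) (1 : Fin 2) (1 : ℂ) ⊗ₖ B)
        * (Rτ ⊗ₖ (1 : Matrix p p ℂ))
      = (Rτᴴ * Matrix.single (0 : Fin 2) (0 : Fin 2) (1 : ℂ) * Rτ) ⊗ₖ A
        + (Rτᴴ * Matrix.single (1 : Fin 2) (1 : Fin 2) (1 : ℂ) * Rτ) ⊗ₖ B := by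
    rw [mul_add, add_mul, ← Matrix.mul_kronecker_mul, ← Matrix.mul_kronecker_mul,
      ← Matrix.mul_kronecker_mul, ← Matrix.mul_kronecker_mul, one_mul, one_mul, mul_one, mul_one]
  rw [key]
  have e0 : (Rτᴴ * Matrix.single (0 : Fin 2) (0 : Fin 2) (1 : ℂ) * Rτ) 0 0 = (τ : ℂ) := by
    subst hR
    simp [Matrix.mul_apply, Fin.sum_univ_two, Matrix.conjTranspose_apply, Matrix.single,
      ← Complex.ofReal_mul, Real.mul_self_sqrt hτ0]
  have e1 : (Rτᴴ * Matrix.single (1 : Fin 2) (1 : Fin 2) (1 : ℂ) * Rτ) 0 0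
      = ((1 - τ : ℝ) : ℂ) := by
    subst hR
    simp [Matrix.mul_apply, Fin.sum_univ_two, Matrix.conjTranspose_apply, Matrix.single,
      ← Complex.ofReal_mul, Real.mul_self_sqrt (by linarith : (0:ℝ) ≤ 1 - τ)]
  simp only [Matrix.add_apply, Matrix.kroneckerMap_apply, e0, e1]

lemma reindex_unitary {m p : Type*} [Fintype m] [Fintype p] [DecidableEq m] [DecidableEq p]
    (e : Equiv m p) (V : Matrix m m ℂ) (h : V ∈ Matrix.unitaryGroup m ℂ) :
    Matrix.reindex e e V ∈ Matrix.unitaryGroup p ℂ := by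
  rw [Matrix.mem_unitaryGroup_iff'] at *
  show (Matrix.reindex e e V)ᴴ * _ = 1
  rw [Matrix.reindex_apply, Matrix.conjTranspose_submatrix, Matrix.submatrix_mul_equiv,
    show Vᴴ * V = 1 from h, Matrix.submatrix_one_equiv]

/-- **Vector sum of vector-encodings** (Lemma 2.2).
Given an `(α, c, ε₀)`-VE `Uψ` for `ψ` and a `(β, c, ε₁)`-VE `Uφ` for `φ`, the circuit
`V = (Rτ† ⊗ I)(|0⟩⟨0| ⊗ Uψ + |1⟩⟨1| ⊗ Uφ)(Rτ ⊗ I)` (with the single control qubit joined to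
the ancilla register, i.e. reindexed along the product associator) is a
`(𝒩⁻¹, c + 1, (ε₀/α + ε₁/β)/𝒩)`-VE for `Γ/𝒩` where
`Γ = (τ/α)ψ + ((1-τ)/β)φ` and `𝒩 = ‖Γ‖₂`. -/
theorem vector_sum_of_vector_encodings
    (c n : ℕ) (τ α β ε₀ ε₁ : ℝ)
    (hτ0 : 0 ≤ τ) (hτ1 : τ ≤ 1)
    (hα : 1 ≤ α) (hβ : 1 ≤ β) (hε₀ : 0 ≤ ε₀) (hε₁ : 0 ≤ ε₁)
    (Uψ Uφ : Matrix (Fin (2^c) × Fin (2^n)) (Fin (2^c) × Fin (2^n)) ℂ)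
    (ψ φ : EuclideanSpace ℂ (Fin (2^n)))
    (hψn : ‖ψ‖ = 1) (hφn : ‖φ‖ = 1)
    (hUψ : IsVE Uψ α ε₀ ψ) (hUφ : IsVE Uφ β ε₁ φ)
    (Γ : EuclideanSpace ℂ (Fin (2^n)))
    (hΓ : Γ = ((τ / α : ℝ) : ℂ) • ψ + (((1 - τ) / β : ℝ) : ℂ) • φ)
    (𝒩 : ℝ) (h𝒩 : 𝒩 = ‖Γ‖) (h𝒩pos : 0 < 𝒩)
    (Rτ : Matrix (Fin 2) (Fin 2) ℂ)
    (hR : Rτ = !![(Real.sqrt τ : ℂ), -(Real.sqrt (1 - τ) : ℂ);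
                  (Real.sqrt (1 - τ) : ℂ), (Real.sqrt τ : ℂ)])
    (V : Matrix (Fin 2 × (Fin (2^c) × Fin (2^n))) (Fin 2 × (Fin (2^c) × Fin (2^n))) ℂ)
    (hV : V = (Rτᴴ ⊗ₖ (1 : Matrix (Fin (2^c) × Fin (2^n)) (Fin (2^c) × Fin (2^n)) ℂ))
        * (Matrix.single (0 : Fin 2) (0 : Fin 2) (1 : ℂ) ⊗ₖ Uψ
            + Matrix.single (1 : Fin 2) (1 : Fin 2) (1 : ℂ) ⊗ₖ Uφ)
        * (Rτ ⊗ₖ (1 : Matrix (Fin (2^c) × Fin (2^n)) (Fin (2^c) × Fin (2^n)) ℂ))) :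
    IsVE (Matrix.reindex (Equiv.prodAssoc (Fin 2) (Fin (2^c)) (Fin (2^n))).symm
        (Equiv.prodAssoc (Fin 2) (Fin (2^c)) (Fin (2^n))).symm V)
      𝒩⁻¹ ((ε₀ / α + ε₁ / β) / 𝒩) (𝒩⁻¹ • Γ) := by
  obtain ⟨hUψu, hUψe⟩ := hUψ
  obtain ⟨hUφu, hUφe⟩ := hUφ
  have hα0 : (0:ℝ) < α := by linarith
  have hβ0 : (0:ℝ) < β := by linarith
  constructor
  · -- unitarity
    apply reindex_unitary
    rw [hV]
    refine mul_mem (mul_mem ?_ (mid_unitary hUψu hUφu)) ?_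
    · have : Rτᴴ = star Rτ := rfl
      rw [this]
      exact kron_unitary (Unitary.star_mem (hR ▸ Rt_unitary τ hτ0 hτ1))
        (Submonoid.one_mem _)
    · exact kron_unitary (hR ▸ Rt_unitary τ hτ0 hτ1) (Submonoid.one_mem _)
  · -- norm bound
    set u := encVec Uψ with hu
    set v := encVec Uφ with hv
    have henc : encVec (Matrix.reindex (Equiv.prodAssoc (Fin 2) (Fin (2^c)) (Fin (2^n))).symm
        (Equiv.prodAssoc (Fin 2) (Fin (2^c)) (Fin (2^n))).symm V)
        = (τ : ℂ) • u + ((1 - τ : ℝ) : ℂ) • v := by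
      ext i
      show V (0, ((0 : Fin (2^c)), i)) (0, ((0 : Fin (2^c)), (0 : Fin (2^n))))
          = (τ : ℂ) * u i + ((1 - τ : ℝ) : ℂ) * v i
      rw [hV]
      have := V_entry (p := Fin (2^c) × Fin (2^n)) τ hτ0 hτ1 Uψ Uφ
        ((0 : Fin (2^c)), i) ((0 : Fin (2^c)), (0 : Fin (2^n))) Rτ hR
      exact this
    rw [henc]
    have hαc : (α : ℂ) ≠ 0 := by exact_mod_cast hα0.ne'
    have hβc : (β : ℂ) ≠ 0 := by exact_mod_cast hβ0.ne'
    have h1 : ((τ / α : ℝ) : ℂ) * (α : ℂ) = (τ : ℂ) := by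
      push_cast; exact div_mul_cancel₀ _ hαc
    have h2 : (((1 - τ) / β : ℝ) : ℂ) * (β : ℂ) = ((1 - τ : ℝ) : ℂ) := by
      push_cast; exact div_mul_cancel₀ _ hβc
    have hexp : Γ - ((τ : ℂ) • u + ((1 - τ : ℝ) : ℂ) • v)
        = ((τ / α : ℝ) : ℂ) • (ψ - (α : ℂ) • u)
          + (((1 - τ) / β : ℝ) : ℂ) • (φ - (β : ℂ) • v) := by
      rw [hΓ, smul_sub, smul_sub, smul_smul, smul_smul, h1, h2]
      abel
    have hsmul : (𝒩⁻¹ : ℝ) • Γ - ((𝒩⁻¹ : ℝ) : ℂ) • ((τ : ℂ) • u + ((1 - τ : ℝ) : ℂ) • v)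
        = ((𝒩⁻¹ : ℝ) : ℂ) • (Γ - ((τ : ℂ) • u + ((1 - τ : ℝ) : ℂ) • v)) := by
      rw [smul_sub]
      congr 1
    rw [hsmul, hexp]
    have hb1 : ‖((τ / α : ℝ) : ℂ) • (ψ - (α : ℂ) • u)‖ ≤ ε₀ / α := by
      rw [norm_smul, Complex.norm_real, Real.norm_eq_abs,
        abs_of_nonneg (by positivity : (0:ℝ) ≤ τ / α)]
      calc τ / α * ‖ψ - (α : ℂ) • u‖ ≤ 1 / α * ε₀ := by
            apply mul_le_mul _ hUψe (norm_nonneg _) (by positivity)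
            gcongr
          _ = ε₀ / α := by ring
    have hb2 : ‖(((1 - τ) / β : ℝ) : ℂ) • (φ - (β : ℂ) • v)‖ ≤ ε₁ / β := by
      rw [norm_smul, Complex.norm_real, Real.norm_eq_abs,
        abs_of_nonneg (div_nonneg (by linarith) hβ0.le)]
      calc (1 - τ) / β * ‖φ - (β : ℂ) • v‖ ≤ 1 / β * ε₁ := by
            apply mul_le_mul _ hUφe (norm_nonneg _) (div_nonneg (by linarith) hβ0.le)
            gcongr
            linarith
          _ = ε₁ / β := by ring
    calc ‖((𝒩⁻¹ : ℝ) : ℂ) • (((τ / α : ℝ) : ℂ) • (ψ - (α : ℂ) • u)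
            + (((1 - τ) / β : ℝ) : ℂ) • (φ - (β : ℂ) • v))‖
        = 𝒩⁻¹ * ‖((τ / α : ℝ) : ℂ) • (ψ - (α : ℂ) • u)
            + (((1 - τ) / β : ℝ) : ℂ) • (φ - (β : ℂ) • v)‖ := by
          rw [norm_smul, Complex.norm_real, Real.norm_eq_abs,
            abs_of_nonneg (by positivity)]
      _ ≤ 𝒩⁻¹ * (ε₀ / α + ε₁ / β) := by
          apply mul_le_mul_of_nonneg_left _ (by positivity)
          exact (norm_add_le _ _).trans (add_le_add hb1 hb2)
      _ = (ε₀ / α + ε₁ / β) / 𝒩 := by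
          rw [inv_mul_eq_div]
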